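/- Let γ⁰, γ¹, γ² be 2x2 complex matrices satisfying the Clifford relations with η = diag(-1,1,1) and (γ⁰)* = γ⁰, (γᵃ)* = -γᵃ. For Ψ, Φ ∈ ℂ², t > 0, x₁, x₂ ∈ ℝ, define Ψ₋ := Ψ - (x_a/t)γ⁰γᵃΨ and Ψ₊ := Ψ + (x_a/t)γ⁰γᵃΨ (sum over a = 1,2), similarly for Φ. Then 4 Ψ* γ⁰ Φ = (Ψ₋)* γ⁰ Φ₋ + (Ψ₋)* γ⁰ Φ₊ + (Ψ₊)* γ⁰ Φ₋ + ((t² - x₁² - x₂²)/t²) Ψ* γ⁰ Φ. -/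

import Mathlib

open Matrix

noncomputable section

abbrev M2 := Matrix (Fin 2) (Fin 2) ℂ

/-- The Minkowski metric η = diag(-1, 1, 1). -/
def η : Fin 3 → Fin 3 → ℝ := fun μ ν =>
  if μ = ν then (if μ = 0 then -1 else 1) else 0

/-- Hidden Klein-Gordon structure of the Lorentz scalar Ψ*γ⁰Φ. -/
theorem hidden_KG_decomposition
    (γ : Fin 3 → M2)
    (hClif : ∀ μ ν : Fin 3, γ μ * γ ν + γ ν * γ μ = (-2 * (η μ ν : ℂ)) • (1 : M2))
    (h0 : (γ 0)ᴴ = γ 0) (ha : ∀ a : Fin 2, (γ a.succ)ᴴ = -(γ a.succ))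
    (Ψ Φ : Fin 2 → ℂ) (t : ℝ) (ht : 0 < t) (x : Fin 2 → ℝ) :
    let minus : (Fin 2 → ℂ) → (Fin 2 → ℂ) := fun Θ =>
      Θ - ∑ a : Fin 2, ((x a / t : ℝ) : ℂ) • (γ 0 * γ a.succ).mulVec Θ
    let plus : (Fin 2 → ℂ) → (Fin 2 → ℂ) := fun Θ =>
      Θ + ∑ a : Fin 2, ((x a / t : ℝ) : ℂ) • (γ 0 * γ a.succ).mulVec Θ
    4 * (star Ψ ⬝ᵥ (γ 0).mulVec Φ)
      = star (minus Ψ) ⬝ᵥ (γ 0).mulVec (minus Φ)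
        + star (minus Ψ) ⬝ᵥ (γ 0).mulVec (plus Φ)
        + star (plus Ψ) ⬝ᵥ (γ 0).mulVec (minus Φ)
        + (((t ^ 2 - x 0 ^ 2 - x 1 ^ 2) / t ^ 2 : ℝ) : ℂ) *
            (star Ψ ⬝ᵥ (γ 0).mulVec Φ) := by
  intro minus plus
  set c : Fin 2 → ℂ := fun a => ((x a / t : ℝ) : ℂ) with hc
  set r : ℂ := (((t ^ 2 - x 0 ^ 2 - x 1 ^ 2) / t ^ 2 : ℝ) : ℂ) with hr
  -- basic Clifford consequences
  have anti : ∀ μ ν : Fin 3, μ ≠ ν → γ μ * γ ν = -(γ ν * γ μ) := by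
    intro μ ν hne
    have h := hClif μ ν
    rw [show η μ ν = 0 by simp [η, hne]] at h
    simp only [Complex.ofReal_zero, mul_zero, zero_smul] at h
    exact eq_neg_of_add_eq_zero_left h
  have sq0 : γ 0 * γ 0 = 1 := by
    have h := hClif 0 0
    rw [show η 0 0 = -1 by simp [η]] at h
    have h2 : (2 : ℂ) • (γ 0 * γ 0) = (2 : ℂ) • (1 : M2) := by
      rw [two_smul, h]; norm_num
    exact smul_right_injective M2 two_ne_zero h2
  have sqa : ∀ a : Fin 2, γ a.succ * γ a.succ = -1 := by
    intro a
    have h := hClif a.succ a.succ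
    rw [show η a.succ a.succ = 1 by simp [η, Fin.succ_ne_zero]] at h
    have h2 : (2 : ℂ) • (γ a.succ * γ a.succ) = (2 : ℂ) • (-1 : M2) := by
      rw [two_smul, h]; norm_num
    exact smul_right_injective M2 two_ne_zero h2
  have sq1 : γ 1 * γ 1 = -1 := sqa 0
  have sq2 : γ 2 * γ 2 = -1 := sqa 1
  have a01 : γ 0 * γ 1 = -(γ 1 * γ 0) := anti 0 1 (by decide)
  have a02 : γ 0 * γ 2 = -(γ 2 * γ 0) := anti 0 2 (by decide)
  have a12 : γ 1 * γ 2 = -(γ 2 * γ 1) := anti 1 2 (by decide)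
  have a10 : γ 1 * γ 0 = -(γ 0 * γ 1) := anti 1 0 (by decide)
  have a20 : γ 2 * γ 0 = -(γ 0 * γ 2) := anti 2 0 (by decide)
  have h1H : (γ 1)ᴴ = -(γ 1) := ha 0
  have h2H : (γ 2)ᴴ = -(γ 2) := ha 1
  -- the matrix A and its friends
  set A : M2 := c 0 • (γ 0 * γ 1) + c 1 • (γ 0 * γ 2) with hA
  set b : M2 := c 0 • γ 1 + c 1 • γ 2 with hb
  set s : ℂ := c 0 ^ 2 + c 1 ^ 2 with hs
  have hstar : ∀ a : Fin 2, star (c a) = c a := by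
    intro a; simp [hc]
  have hAH : Aᴴ = A := by
    rw [hA, conjTranspose_add, conjTranspose_smul, conjTranspose_smul,
      conjTranspose_mul, conjTranspose_mul, h0, h1H, h2H, hstar, hstar,
      neg_mul, ← a01, neg_mul, ← a02]
  have hg0A : γ 0 * A = b := by
    rw [hA, hb, mul_add, mul_smul_comm, mul_smul_comm, ← mul_assoc, ← mul_assoc,
      sq0, one_mul, one_mul]
  have hAg0 : A * γ 0 = -b := by
    rw [hA, hb, add_mul, smul_mul_assoc, smul_mul_assoc, mul_assoc, mul_assoc,
      a10, a20, mul_neg, mul_neg, ← mul_assoc, ← mul_assoc, sq0, one_mul, one_mul,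
      smul_neg, smul_neg, neg_add]
  have hbb : b * b = (-s) • 1 := by
    rw [hb, hs]
    simp only [add_mul, mul_add, smul_mul_assoc, mul_smul_comm, sq1, sq2, a12]
    match_scalars <;> ring
  have hAA : A * A = s • 1 := by
    have h1 : A * A = A * (γ 0 * (γ 0 * A)) := by
      rw [← mul_assoc (γ 0), sq0, one_mul]
    rw [h1, hg0A, ← mul_assoc, hAg0, neg_mul, hbb, neg_smul, neg_neg]
  have hbA : b * A = s • γ 0 := by
    rw [← hg0A, mul_assoc, hAA, mul_smul_comm, mul_one]
  have hAb : A * b = (-s) • γ 0 := by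
    rw [← hg0A, ← mul_assoc, hAg0, neg_mul, hbA, ← neg_smul]
  -- scalar identity
  have htne : (t : ℂ) ≠ 0 := by
    exact_mod_cast ne_of_gt ht
  have hsr : s + r = 1 := by
    simp only [hs, hc, hr]
    push_cast
    field_simp
    ring
  clear_value A b s
  -- the main matrix identity
  have e1 : γ 0 * (1 - A) = γ 0 - b := by rw [mul_sub, mul_one, hg0A]
  have e2 : γ 0 * (1 + A) = γ 0 + b := by rw [mul_add, mul_one, hg0A]
  have hmain : (1 - A) * (γ 0 * (1 - A)) + (1 - A) * (γ 0 * (1 + A))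
      + (1 + A) * (γ 0 * (1 - A)) + r • γ 0 = (4 : ℂ) • γ 0 := by
    rw [e1, e2, sub_mul, sub_mul, add_mul, one_mul, one_mul,
      mul_sub A, mul_add A, hAg0, hAb]
    match_scalars <;> first
      | ring1
      | linear_combination hsr
  -- vector-level reductions
  have hminusv : ∀ Θ : Fin 2 → ℂ, minus Θ = (1 - A) *ᵥ Θ := by
    intro Θ
    show Θ - ∑ a : Fin 2, ((x a / t : ℝ) : ℂ) • (γ 0 * γ a.succ) *ᵥ Θ = _
    rw [Matrix.sub_mulVec, Matrix.one_mulVec, hA, Matrix.add_mulVec,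
      Matrix.smul_mulVec, Matrix.smul_mulVec, Fin.sum_univ_two]
    norm_num [hc]
  have hplusv : ∀ Θ : Fin 2 → ℂ, plus Θ = (1 + A) *ᵥ Θ := by
    intro Θ
    show Θ + ∑ a : Fin 2, ((x a / t : ℝ) : ℂ) • (γ 0 * γ a.succ) *ᵥ Θ = _
    rw [Matrix.add_mulVec, Matrix.one_mulVec, hA, Matrix.add_mulVec,
      Matrix.smul_mulVec, Matrix.smul_mulVec, Fin.sum_univ_two]
    norm_num [hc]
  have key : ∀ (N M : M2), star (N *ᵥ Ψ) ⬝ᵥ (M *ᵥ Φ) = star Ψ ⬝ᵥ ((Nᴴ * M) *ᵥ Φ) := by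
    intro N M
    simp only [Matrix.star_mulVec, Matrix.dotProduct_mulVec, Matrix.vecMul_vecMul]
  rw [hminusv Ψ, hminusv Φ, hplusv Ψ, hplusv Φ]
  rw [Matrix.mulVec_mulVec, Matrix.mulVec_mulVec, key, key, key]
  rw [conjTranspose_sub, conjTranspose_add, conjTranspose_one, hAH]

  rw [show r * (star Ψ ⬝ᵥ γ 0 *ᵥ Φ) = star Ψ ⬝ᵥ ((r • γ 0) *ᵥ Φ) by
    rw [Matrix.smul_mulVec, dotProduct_smul, smul_eq_mul]]
  rw [show (4 : ℂ) * (star Ψ ⬝ᵥ γ 0 *ᵥ Φ) = star Ψ ⬝ᵥ (((4 : ℂ) • γ 0) *ᵥ Φ) by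
    rw [Matrix.smul_mulVec, dotProduct_smul, smul_eq_mul]]
  rw [← dotProduct_add, ← dotProduct_add, ← dotProduct_add,
    ← Matrix.add_mulVec, ← Matrix.add_mulVec, ← Matrix.add_mulVec]
  exact congrArg (fun B : M2 => star Ψ ⬝ᵥ B *ᵥ Φ) hmain.symm
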